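/- For a finitely presented module N over a commutative ring R and a flat R-module M, the natural map from (Dual of N) ⊗ M to Hom(N, M), sending w ⊗ m to the map n ↦ w(n) • m, is an isomorphism. -/

import Mathlib

universe u

open LinearMap TensorProduct

/-- For a finitely presented module `N` over a commutative ring `R` and a flat `R`-module `M`,
the natural map `N* ⊗ M → Hom(N, M)`, `w ⊗ m ↦ (n ↦ w n • m)`, is an isomorphism. -/
theorem dualTensorHom_bijective_of_finitePresentation_of_flat
    (R : Type u) [CommRing R]
    (N : Type u) [AddCommGroup N] [Module R N] [Module.FinitePresentation R N]
    (M : Type u) [AddCommGroup M] [Module R M] [Module.Flat R M] :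
    Function.Bijective (dualTensorHom R N M) := by
  classical
  obtain ⟨n, π, hπ⟩ := Module.Finite.exists_fin' R N
  have hker : (LinearMap.ker π).FG := Module.FinitePresentation.fg_ker π hπ
  obtain ⟨m, s, hs⟩ := Submodule.fg_iff_exists_fin_generating_family.mp hker
  set f : (Fin m → R) →ₗ[R] (Fin n → R) := Fintype.linearCombination R s with hfdef
  have hf : LinearMap.range f = LinearMap.ker π := by
    rw [hfdef, Fintype.range_linearCombination, hs]
  have hzf : ∀ z, π (f z) = 0 := fun z => by
    have : f z ∈ LinearMap.ker π := hf ▸ LinearMap.mem_range_self f z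
    simpa using this
  -- vertical maps
  set α : (Module.Dual R N ⊗[R] M) →ₗ[R] (Module.Dual R (Fin n → R) ⊗[R] M) :=
    (π.dualMap).rTensor M with hα
  set β : (Module.Dual R (Fin n → R) ⊗[R] M) →ₗ[R] (Module.Dual R (Fin m → R) ⊗[R] M) :=
    (f.dualMap).rTensor M with hβ
  have hαinj : Function.Injective α := by
    apply Module.Flat.rTensor_preserves_injective_linearMap
    intro w w' h
    refine LinearMap.ext fun x => ?_
    obtain ⟨y, rfl⟩ := hπ x
    exact congrFun (congrArg DFunLike.coe h) y
  have hbn : Function.Bijective (dualTensorHom R (Fin n → R) M) := by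
    have h : (dualTensorHom R (Fin n → R) M : Module.Dual R (Fin n → R) ⊗[R] M → _) =
        ⇑(dualTensorHomEquivOfBasis (N := M) (Pi.basisFun R (Fin n))) :=
      funext fun x => (dualTensorHomEquivOfBasis_apply (Pi.basisFun R (Fin n)) x).symm
    rw [h]
    exact (dualTensorHomEquivOfBasis _).bijective
  have hbm : Function.Bijective (dualTensorHom R (Fin m → R) M) := by
    have h : (dualTensorHom R (Fin m → R) M : Module.Dual R (Fin m → R) ⊗[R] M → _) =
        ⇑(dualTensorHomEquivOfBasis (N := M) (Pi.basisFun R (Fin m))) :=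
      funext fun x => (dualTensorHomEquivOfBasis_apply (Pi.basisFun R (Fin m)) x).symm
    rw [h]
    exact (dualTensorHomEquivOfBasis _).bijective
  have comm₁ : ∀ x, dualTensorHom R (Fin n → R) M (α x) = (dualTensorHom R N M x).comp π := by
    intro x
    induction x using TensorProduct.induction_on with
    | zero => simp
    | tmul w mm => refine LinearMap.ext fun y => ?_; simp [hα]
    | add x y hx hy => simp [map_add, hx, hy, LinearMap.add_comp]
  have comm₂ : ∀ x, dualTensorHom R (Fin m → R) M (β x) =
      (dualTensorHom R (Fin n → R) M x).comp f := by
    intro x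
    induction x using TensorProduct.induction_on with
    | zero => simp
    | tmul w mm => refine LinearMap.ext fun y => ?_; simp [hβ]
    | add x y hx hy => simp [map_add, hx, hy, LinearMap.add_comp]
  -- exactness of the dual sequence tensored with M : ker β = range α
  have hdualexact : Function.Exact (π.dualMap) (f.dualMap) := by
    intro w
    constructor
    · intro hw
      have hle : LinearMap.ker π ≤ LinearMap.ker w := by
        rw [← hf]
        rintro _ ⟨y, rfl⟩
        simpa using congrFun (congrArg DFunLike.coe hw) y
      refine ⟨(LinearMap.ker π).liftQ w hle ∘ₗ
        (π.quotKerEquivOfSurjective hπ).symm.toLinearMap, ?_⟩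
      refine LinearMap.ext fun x => ?_
      have : (π.quotKerEquivOfSurjective hπ).symm (π x) = Submodule.Quotient.mk x := by
        apply (π.quotKerEquivOfSurjective hπ).injective
        simp [LinearMap.quotKerEquivOfSurjective]
      simp [this]
    · rintro ⟨v, rfl⟩
      refine LinearMap.ext fun y => ?_
      simp [hzf y]
  have hexact : Function.Exact α β :=
    Module.Flat.rTensor_exact M hdualexact
  constructor
  · intro x y h
    apply hαinj
    apply hbn.injective
    rw [comm₁, comm₁, h]
  · intro g
    obtain ⟨y, hy⟩ := hbn.surjective (g.comp π)
    have hβy : β y = 0 := by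
      apply hbm.injective
      rw [comm₂, hy, map_zero]
      refine LinearMap.ext fun z => ?_
      simp [hzf z]
    obtain ⟨x, hx⟩ := (hexact y).mp hβy
    refine ⟨x, ?_⟩
    have h2 : (dualTensorHom R N M x).comp π = g.comp π := by
      rw [← comm₁, hx, hy]
    refine LinearMap.ext fun z => ?_
    obtain ⟨y', rfl⟩ := hπ z
    exact congrFun (congrArg DFunLike.coe h2) y'
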